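/- Every uncountable closed subset F of the Sorgenfrey line contains an uncountable subset C that is closed in the Sorgenfrey line and has no isolated points (in its subspace topology). -/

import Mathlib

open Set Filter Topology Function

/-- The Sorgenfrey line: the real line as a type synonym. -/
def SorgenfreyLine : Type := ℝ

notation "𝕊" => SorgenfreyLine

noncomputable instance : LinearOrder 𝕊 := inferInstanceAs (LinearOrder ℝ)
instance : RatCast 𝕊 := inferInstanceAs (RatCast ℝ)

/-- The topology on the Sorgenfrey line, generated by half-open intervals `[a, b)`, `a < b`. -/
instance : TopologicalSpace 𝕊 :=
  TopologicalSpace.generateFrom {s : Set 𝕊 | ∃ a b : 𝕊, a < b ∧ s = Set.Ico a b}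

/-- A subset of `ℝ` all of whose "right tails" (from points of the set) are countable is
countable. -/
lemma countable_of_countable_inter_Ici (A : Set ℝ)
    (h : ∀ x ∈ A, (A ∩ Ici x).Countable) : A.Countable := by
  obtain ⟨t, hts, htc, hst⟩ :=
    (TopologicalSpace.IsSeparable.of_separableSpace A).exists_countable_dense_subset
  rcases t.eq_empty_or_nonempty with rfl | htne
  · have : A ⊆ (∅ : Set ℝ) := by simpa using hst
    exact Set.Countable.mono this countable_empty
  have hsub : A ⊆ (⋃ s ∈ t, A ∩ Ici s) ∪ {sInf t} := by
    intro y hy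
    by_cases hex : ∃ s ∈ t, s ≤ y
    · obtain ⟨s, hs, hsy⟩ := hex
      exact Or.inl (mem_iUnion₂.2 ⟨s, hs, hy, hsy⟩)
    · push_neg at hex
      have hlb : y ∈ lowerBounds t := fun s hs => (hex s hs).le
      have hglb : IsGLB t y := by
        refine ⟨hlb, fun z hz => ?_⟩
        by_contra hzy
        push_neg at hzy
        have hyc : y ∈ closure t := hst hy
        rw [mem_closure_iff] at hyc
        obtain ⟨s, hs, hst'⟩ := hyc (Iio z) isOpen_Iio hzy
        exact absurd (hz hst') (not_le.2 hs)
      right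
      simp [hglb.csInf_eq htne]
  refine Set.Countable.mono hsub ?_
  exact (Set.Countable.biUnion htc fun s hs => h s (hts hs)).union (countable_singleton _)

lemma isOpen_Ico_sorgenfrey {a b : 𝕊} (hab : a < b) : IsOpen (Ico a b) :=
  TopologicalSpace.isOpen_generateFrom_of_mem ⟨a, b, hab, rfl⟩

/-- Every Sorgenfrey-open set contains a half-open interval around each of its points. -/
lemma sorgenfrey_exists_Ico_subset {U : Set 𝕊} (hU : IsOpen U) :
    ∀ x ∈ U, ∃ b, x < b ∧ Ico x b ⊆ U := by
  have hU' : TopologicalSpace.GenerateOpen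
      {s : Set 𝕊 | ∃ a b : 𝕊, a < b ∧ s = Set.Ico a b} U := hU
  clear hU
  induction hU' with
  | basic s hs =>
    obtain ⟨a, b, hab, rfl⟩ := hs
    exact fun x hx => ⟨b, hx.2, fun y hy => ⟨hx.1.trans hy.1, hy.2⟩⟩
  | univ =>
    intro x _
    refine ⟨(show ℝ from x) + 1, ?_, fun _ _ => trivial⟩
    exact lt_add_one (show ℝ from x)
  | inter s t hs ht ihs iht =>
    intro x hx
    obtain ⟨b₁, hb₁, hsb₁⟩ := ihs x hx.1
    obtain ⟨b₂, hb₂, hsb₂⟩ := iht x hx.2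
    exact ⟨min b₁ b₂, lt_min hb₁ hb₂,
      fun y hy => ⟨hsb₁ ⟨hy.1, hy.2.trans_le (min_le_left _ _)⟩,
        hsb₂ ⟨hy.1, hy.2.trans_le (min_le_right _ _)⟩⟩⟩
  | sUnion S hS ih =>
    rintro x ⟨s, hsS, hxs⟩
    obtain ⟨b, hb, hsub⟩ := ih s hsS x hxs
    exact ⟨b, hb, hsub.trans (subset_sUnion_of_mem hsS)⟩

/-- Every uncountable closed subset of the Sorgenfrey line contains an uncountable subset that
is closed in the Sorgenfrey line and has no isolated points in its subspace topology. -/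
theorem stmt3 (F : Set 𝕊) (hF : ¬ F.Countable) (hFclosed : IsClosed F) :
    ∃ C ⊆ F, ¬ C.Countable ∧ IsClosed C ∧ ∀ x : C, ¬ IsOpen ({x} : Set C) := by
  -- `C` is the set of "right condensation points" of `F` that lie in `F`.
  set C : Set 𝕊 := {x | x ∈ F ∧ ∀ b, x < b → ¬ (F ∩ Ico x b).Countable} with hCdef
  have hCF : C ⊆ F := fun x hx => hx.1
  -- the sets of points whose right tail up to a rational `q` is countable
  set A : ℚ → Set 𝕊 := fun q => {x | x ∈ F ∧ x < (q : 𝕊) ∧ (F ∩ Ico x ((q : 𝕊))).Countable}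
    with hAdef
  have hAc : ∀ q, (A q).Countable := by
    intro q
    refine countable_of_countable_inter_Ici (A q) ?_
    intro x hx
    refine Set.Countable.mono ?_ hx.2.2
    rintro y ⟨hyA, hyx⟩
    exact ⟨hyA.1, hyx, hyA.2.1⟩
  have hFC : F \ C ⊆ ⋃ q, A q := by
    rintro x ⟨hxF, hxC⟩
    have : ∃ b, x < b ∧ (F ∩ Ico x b).Countable := by
      by_contra hcon
      push_neg at hcon
      exact hxC ⟨hxF, fun b hb => hcon b hb⟩
    obtain ⟨b, hxb, hbc⟩ := this
    obtain ⟨q, hq1, hq2⟩ := exists_rat_btwn (K := ℝ) (show @LT.lt ℝ _ x b from hxb)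
    refine mem_iUnion.2 ⟨q, hxF, hq1, ?_⟩
    refine Set.Countable.mono ?_ hbc
    rintro y ⟨hyF, hy1, hy2⟩
    exact ⟨hyF, hy1, lt_trans hy2 hq2⟩
  have hFCc : (F \ C).Countable := (countable_iUnion hAc).mono hFC
  have hCunc : ¬ C.Countable := by
    intro hc
    apply hF
    have : F ⊆ (F \ C) ∪ C := fun x hx => by
      by_cases hxC : x ∈ C
      · exact Or.inr hxC
      · exact Or.inl ⟨hx, hxC⟩
    exact (hFCc.union hc).mono this
  have hCclosed : IsClosed C := by
    rw [← isOpen_compl_iff]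
    rw [isOpen_iff_forall_mem_open]
    intro x hx
    by_cases hxF : x ∈ F
    · have : ∃ b, x < b ∧ (F ∩ Ico x b).Countable := by
        by_contra hcon
        push_neg at hcon
        exact hx ⟨hxF, fun b hb => hcon b hb⟩
      obtain ⟨b, hxb, hbc⟩ := this
      refine ⟨Ico x b, ?_, isOpen_Ico_sorgenfrey hxb, le_rfl, hxb⟩
      rintro y ⟨hxy, hyb⟩ hyC
      refine hyC.2 b hyb (hbc.mono ?_)
      rintro z ⟨hzF, hz1, hz2⟩
      exact ⟨hzF, hxy.trans hz1, hz2⟩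
    · exact ⟨Fᶜ, fun y hy hyC => hy (hCF hyC), hFclosed.isOpen_compl, hxF⟩
  refine ⟨C, hCF, hCunc, hCclosed, ?_⟩
  -- no isolated points
  rintro ⟨x, hxC⟩ hopen
  rw [isOpen_induced_iff] at hopen
  obtain ⟨U, hU, hUeq⟩ := hopen
  have hxU : x ∈ U := by
    have : (⟨x, hxC⟩ : C) ∈ (Subtype.val ⁻¹' U : Set C) := by
      rw [hUeq]; rfl
    exact this
  obtain ⟨b, hxb, hIco⟩ := sorgenfrey_exists_Ico_subset hU x hxU
  refine hxC.2 b hxb ?_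
  have hsub : F ∩ Ico x b ⊆ (F \ C) ∪ {x} := by
    rintro y ⟨hyF, hyIco⟩
    by_cases hyC : y ∈ C
    · right
      have : (⟨y, hyC⟩ : C) ∈ (Subtype.val ⁻¹' U : Set C) := hIco hyIco
      rw [hUeq] at this
      simpa using congrArg Subtype.val this
    · exact Or.inl ⟨hyF, hyC⟩
  exact (hFCc.union (countable_singleton _)).mono hsub
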